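/- If a finite Wang tileset τ admits a tiling of the plane that is vertically periodic (with some period p > 0) , then τ admits a fully periodic tiling, i.e. a tiling g and an integer q > 0 with g(i,j) = g(i+q,j) = g(i,j+q) for all i,j. -/

import Mathlib

structure WangTile (C : Type) where
  e : C
  w : C
  n : C
  s : C
deriving DecidableEq

def IsTiling {C : Type} (τ : Set (WangTile C)) (f : ℤ → ℤ → WangTile C) : Prop :=
  (∀ i j, f i j ∈ τ) ∧ (∀ i j, (f i j).e = (f (i+1) j).w) ∧
    (∀ i j, (f i j).n = (f i (j+1)).s)

theorem stmt5 {C : Type} [Fintype C] (τ : Finset (WangTile C))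
    (h : ∃ (f : ℤ → ℤ → WangTile C) (p : ℤ), IsTiling (↑τ : Set (WangTile C)) f ∧
      0 < p ∧ ∀ i j, f i (j + p) = f i j) :
    ∃ (g : ℤ → ℤ → WangTile C) (q : ℤ), IsTiling (↑τ : Set (WangTile C)) g ∧
      0 < q ∧ ∀ i j, g (i + q) j = g i j ∧ g i (j + q) = g i j := by
  obtain ⟨f, p, ht, hp, hper⟩ := h
  have hfin : Finite (WangTile C) :=
    Finite.of_injective (fun t => (t.e, t.w, t.n, t.s)) (by
      intro x y hxy; cases x; cases y; simp_all)
  -- vertical periodicity for all multiples of p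
  have hA : ∀ (n : ℤ) (i j : ℤ), f i (j + n * p) = f i j := by
    intro n
    induction n using Int.induction_on with
    | zero => simp
    | succ n ih =>
        intro i j
        have e : j + ((n : ℤ) + 1) * p = (j + n * p) + p := by ring
        rw [e, hper, ih]
    | pred n ih =>
        intro i j
        have e : (j + (-(n : ℤ) - 1) * p) + p = j + (-n : ℤ) * p := by ring
        have := hper i (j + (-(n : ℤ) - 1) * p)
        rw [e] at this
        rw [← ih i j, ← this]
  -- pigeonhole: two equal columns
  have hpnz : p ≠ 0 := hp.ne'
  obtain ⟨a, b, hab, hE⟩ :=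
    Finite.exists_ne_map_eq_of_infinite
      (fun i : ℤ => fun k : Fin p.toNat => f i (k : ℤ))
  -- wlog a < b
  obtain ⟨a, b, hab, hE⟩ : ∃ a b : ℤ, a < b ∧
      (fun k : Fin p.toNat => f a (k : ℤ)) = (fun k : Fin p.toNat => f b (k : ℤ)) := by
    rcases lt_or_gt_of_ne hab with h' | h'
    · exact ⟨a, b, h', hE⟩
    · exact ⟨b, a, h', hE.symm⟩
  -- equal columns for all j
  have hcol : ∀ j : ℤ, f a j = f b j := by
    intro j
    have h1 : j % p + p * (j / p) = j := Int.emod_add_mul_ediv j p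
    have h2 : 0 ≤ j % p := Int.emod_nonneg j hpnz
    have h3 : j % p < p := Int.emod_lt_of_pos j hp
    have hk : (j % p).toNat < p.toNat := by omega
    have hEk := congrFun hE ⟨(j % p).toNat, hk⟩
    simp only at hEk
    have hcast : ((⟨(j % p).toNat, hk⟩ : Fin p.toNat) : ℤ) = j % p := by
      simp [Int.toNat_of_nonneg h2]
    rw [hcast] at hEk
    calc f a j = f a (j % p + (j / p) * p) := by rw [mul_comm, h1]
      _ = f a (j % p) := hA (j / p) a (j % p)
      _ = f b (j % p) := hEk
      _ = f b (j % p + (j / p) * p) := (hA (j / p) b (j % p)).symm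
      _ = f b j := by rw [mul_comm, h1]
  set q' : ℤ := b - a with hq'
  have hq'pos : 0 < q' := by omega
  set g : ℤ → ℤ → WangTile C := fun i j => f (a + (i - a) % q') j with hg
  have hr0 : ∀ i : ℤ, 0 ≤ (i - a) % q' := fun i => Int.emod_nonneg _ hq'pos.ne'
  have hr1 : ∀ i : ℤ, (i - a) % q' < q' := fun i => Int.emod_lt_of_pos _ hq'pos
  -- the next column of g
  have hnext : ∀ i j, g (i + 1) j = f (a + (i - a) % q' + 1) j := by
    intro i j
    have e1 : (i + 1 - a) % q' = ((i - a) % q' + 1) % q' := by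
      conv_lhs => rw [show i + 1 - a = (i - a) % q' + 1 + q' * ((i - a) / q') by
        have := Int.emod_add_mul_ediv (i - a) q'; omega]
      rw [Int.add_mul_emod_self_left]
    rcases eq_or_lt_of_le (by have := hr1 i; omega : (i - a) % q' + 1 ≤ q') with he | hl
    · have : ((i - a) % q' + 1) % q' = 0 := by rw [he]; simp
      show f (a + (i + 1 - a) % q') j = _
      rw [e1, this, add_zero]
      calc f a j = f b j := hcol j
        _ = f (a + (i - a) % q' + 1) j := by rw [show a + (i - a) % q' + 1 = b by omega]
    · have : ((i - a) % q' + 1) % q' = (i - a) % q' + 1 :=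
        Int.emod_emod_of_dvd _ dvd_rfl ▸ Int.emod_eq_of_lt (by have := hr0 i; omega) hl
      show f (a + (i + 1 - a) % q') j = _
      rw [e1, this, add_assoc]
  refine ⟨g, p * q', ⟨fun i j => ht.1 _ _, fun i j => ?_, fun i j => ht.2.2 _ _⟩,
    mul_pos hp hq'pos, fun i j => ⟨?_, ?_⟩⟩
  · -- horizontal edge condition
    rw [hnext i j]
    exact ht.2.1 (a + (i - a) % q') j
  · -- horizontal periodicity
    show f (a + (i + p * q' - a) % q') j = f (a + (i - a) % q') j
    congr 2
    rw [show i + p * q' - a = (i - a) + q' * p by ring, Int.add_mul_emod_self_left]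
  · -- vertical periodicity
    show f _ (j + p * q') = f _ j
    rw [show p * q' = q' * p by ring]
    exact hA q' _ j
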